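/- Fix an integer k ≥ 1. Let p ∈ Q^{k−2,k−2}[x,y], t̃ ∈ P^{k−2}[x], s̃ ∈ P^{k−2}[y] be polynomials and let χ ∈ Q^{k−1,k−1,k−2}_{k+2}. Set r = x(1−x)y(1−y)p(x,y), t = x(1−x)t̃(x), s = y(1−y)s̃(y), and define u : Ω∞° → ℝ³ by u(x,y,z) = (z^{k−1}/(1+z)^{k+2})·( ∂r/∂y + 2t, ∂r/∂x + 2s, (1+z)(∂²r/∂x∂y + ∂s/∂y + ∂t/∂x) ) + (0, 0, z·χ(x,y,z)). If div u = 0 at every point of Ω∞°, then u = 0 on Ω∞° (indeed p = 0, t̃ = 0, s̃ = 0 and χ = 0). In other words, the divergence operator is injective on the space U^{(2),k}_{0,div}(Ω∞) of all functions of this form. -/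

import Mathlib

noncomputable section

/-- The interior `Ω∞° = (0,1) × (0,1) × (0,∞)` of the infinite pyramid. -/
def PyrInfInt : Set (ℝ × ℝ × ℝ) :=
  {p | 0 < p.1 ∧ p.1 < 1 ∧ 0 < p.2.1 ∧ p.2.1 < 1 ∧ 0 < p.2.2}

/-- The weighted monomial `x^a y^b z^c / (1+z)^k`. -/
def qmon (k a b c : ℕ) : ℝ × ℝ × ℝ → ℝ :=
  fun p => p.1 ^ a * p.2.1 ^ b * p.2.2 ^ c / (1 + p.2.2) ^ k

/-- The space `Q^{l,m,n}_k`. -/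
def Qsp (l m n : ℤ) (k : ℕ) : Submodule ℝ ((ℝ × ℝ × ℝ) → ℝ) :=
  Submodule.span ℝ
    {f | ∃ a b c : ℕ, (a : ℤ) ≤ l ∧ (b : ℤ) ≤ m ∧ (c : ℤ) ≤ n ∧ f = qmon k a b c}

/-- The divergence of a vector field at a point. -/
def div3 (f : ℝ × ℝ × ℝ → ℝ × ℝ × ℝ) (p : ℝ × ℝ × ℝ) : ℝ :=
  fderiv ℝ (fun q => (f q).1) p ((1 : ℝ), (0 : ℝ), (0 : ℝ)) +
  fderiv ℝ (fun q => (f q).2.1) p ((0 : ℝ), (1 : ℝ), (0 : ℝ)) +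
  fderiv ℝ (fun q => (f q).2.2) p ((0 : ℝ), (0 : ℝ), (1 : ℝ))

/-- `x(1−x)y(1−y)·p` as a polynomial in two variables. -/
def bub2 (p : MvPolynomial (Fin 2) ℝ) : MvPolynomial (Fin 2) ℝ :=
  MvPolynomial.X 0 * (1 - MvPolynomial.X 0) * MvPolynomial.X 1 * (1 - MvPolynomial.X 1) * p

/-- `x(1−x)·t̃` as a polynomial in one variable. -/
def bub1 (t : Polynomial ℝ) : Polynomial ℝ := Polynomial.X * (1 - Polynomial.X) * t

/-- The generic element of `U^{(2),k}_{0,div}(Ω∞)` determined by `p ∈ Q^{k−2,k−2}[x,y]`,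
`t̃ ∈ P^{k−2}[x]`, `s̃ ∈ P^{k−2}[y]` and `χ ∈ Q^{k−1,k−1,k−2}_{k+2}`: with
`r = x(1−x)y(1−y)p`, `t = x(1−x)t̃`, `s = y(1−y)s̃`, the field
`(z^{k−1}/(1+z)^{k+2})·(r_y + 2t, r_x + 2s, (1+z)(r_{xy} + s_y + t_x)) + (0,0,z·χ)`. -/
def U2divFun (k : ℕ) (p : MvPolynomial (Fin 2) ℝ) (t s : Polynomial ℝ)
    (χ : (ℝ × ℝ × ℝ) → ℝ) : ℝ × ℝ × ℝ → ℝ × ℝ × ℝ :=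
  fun q =>
    (q.2.2 ^ (k - 1) / (1 + q.2.2) ^ (k + 2)) •
      (MvPolynomial.eval ![q.1, q.2.1] (MvPolynomial.pderiv 1 (bub2 p)) +
         2 * (bub1 t).eval q.1,
       MvPolynomial.eval ![q.1, q.2.1] (MvPolynomial.pderiv 0 (bub2 p)) +
         2 * (bub1 s).eval q.2.1,
       (1 + q.2.2) *
         (MvPolynomial.eval ![q.1, q.2.1]
            (MvPolynomial.pderiv 0 (MvPolynomial.pderiv 1 (bub2 p))) +
          (Polynomial.derivative (bub1 s)).eval q.2.1 +
          (Polynomial.derivative (bub1 t)).eval q.1)) +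
    ((0 : ℝ), (0 : ℝ), q.2.2 * χ q)

/-- Degree constraints for the data of `U^{(2),k}_{0,div}(Ω∞)` (bounds in `ℤ`, so a
negative bound forces the corresponding polynomial to vanish); membership of `χ` in
`Q^{k−1,k−1,k−2}_{k+2}` is recorded separately. -/
def U2divBounds (k : ℕ) (p : MvPolynomial (Fin 2) ℝ) (t s : Polynomial ℝ) : Prop :=
  (∀ d ∈ p.support, (d 0 : ℤ) ≤ (k : ℤ) - 2 ∧ (d 1 : ℤ) ≤ (k : ℤ) - 2) ∧
  (∀ n ∈ t.support, (n : ℤ) ≤ (k : ℤ) - 2) ∧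
  (∀ n ∈ s.support, (n : ℤ) ≤ (k : ℤ) - 2)

/-! ### Auxiliary material for the proof -/

namespace U2divAux

open MvPolynomial Polynomial Set

/-- Projections of `ℝ³` as continuous linear maps. -/
def px : ℝ × ℝ × ℝ →L[ℝ] ℝ := ContinuousLinearMap.fst ℝ ℝ (ℝ × ℝ)
def py : ℝ × ℝ × ℝ →L[ℝ] ℝ :=
  (ContinuousLinearMap.fst ℝ ℝ ℝ).comp (ContinuousLinearMap.snd ℝ ℝ (ℝ × ℝ))
def pz : ℝ × ℝ × ℝ →L[ℝ] ℝ :=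
  (ContinuousLinearMap.snd ℝ ℝ ℝ).comp (ContinuousLinearMap.snd ℝ ℝ (ℝ × ℝ))

@[simp] lemma px_apply (v : ℝ × ℝ × ℝ) : px v = v.1 := rfl
@[simp] lemma py_apply (v : ℝ × ℝ × ℝ) : py v = v.2.1 := rfl
@[simp] lemma pz_apply (v : ℝ × ℝ × ℝ) : pz v = v.2.2 := rfl

lemma pderiv_comm' (i j : Fin 2) (p : MvPolynomial (Fin 2) ℝ) :
    pderiv i (pderiv j p) = pderiv j (pderiv i p) := by
  have hX : ∀ n : Fin 2, pderiv i (pderiv j (X n : MvPolynomial (Fin 2) ℝ))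
      = pderiv j (pderiv i (X n : MvPolynomial (Fin 2) ℝ)) := by
    intro n
    classical
    rcases eq_or_ne n i with rfl | hi <;> rcases eq_or_ne n j with rfl | hj <;>
      simp [pderiv_X_self, pderiv_X_of_ne, *]
  induction p using MvPolynomial.induction_on with
  | C a => simp [pderiv_C]
  | add p q hp hq => simp [map_add, hp, hq]
  | mul_X p n ih =>
      simp only [pderiv_mul, map_add, pderiv_mul, ih, hX n]
      ring

lemma mvHasFDerivAt (A : MvPolynomial (Fin 2) ℝ) (q : ℝ × ℝ × ℝ) :
    HasFDerivAt (fun q : ℝ × ℝ × ℝ => MvPolynomial.eval ![q.1, q.2.1] A)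
      (MvPolynomial.eval ![q.1, q.2.1] (pderiv 0 A) • px + MvPolynomial.eval ![q.1, q.2.1] (pderiv 1 A) • py) q := by
  induction A using MvPolynomial.induction_on with
  | C a => simpa [pderiv_C] using (hasFDerivAt_const a q)
  | add p r hp hr =>
      have h := hp.add hr
      have hf : (fun q : ℝ × ℝ × ℝ => MvPolynomial.eval ![q.1, q.2.1] (p + r))
          = fun q : ℝ × ℝ × ℝ => MvPolynomial.eval ![q.1, q.2.1] p + MvPolynomial.eval ![q.1, q.2.1] r := by
        funext v; simp [map_add]
      have hL : (MvPolynomial.eval ![q.1, q.2.1] (pderiv 0 (p + r)) • px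
            + MvPolynomial.eval ![q.1, q.2.1] (pderiv 1 (p + r)) • py : ℝ × ℝ × ℝ →L[ℝ] ℝ)
          = (MvPolynomial.eval ![q.1, q.2.1] (pderiv 0 p) • px + MvPolynomial.eval ![q.1, q.2.1] (pderiv 1 p) • py)
            + (MvPolynomial.eval ![q.1, q.2.1] (pderiv 0 r) • px + MvPolynomial.eval ![q.1, q.2.1] (pderiv 1 r) • py) := by
        simp only [map_add, add_smul]; abel
      rw [hf, hL]; exact h
  | mul_X p n ih =>
      classical
      have h01 : (0 : Fin 2) ≠ 1 := by decide
      fin_cases n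
      · show HasFDerivAt (fun q : ℝ × ℝ × ℝ => MvPolynomial.eval ![q.1, q.2.1] (p * X 0))
          (MvPolynomial.eval ![q.1, q.2.1] (pderiv 0 (p * X 0)) • px
            + MvPolynomial.eval ![q.1, q.2.1] (pderiv 1 (p * X 0)) • py) q
        have h2 := ih.mul (px.hasFDerivAt (x := q))
        have hf : (fun q : ℝ × ℝ × ℝ => MvPolynomial.eval ![q.1, q.2.1] (p * X 0))
            = fun v : ℝ × ℝ × ℝ => MvPolynomial.eval ![v.1, v.2.1] p * px v := by
          funext v; simp
        have hL : (MvPolynomial.eval ![q.1, q.2.1] (pderiv 0 (p * X 0)) • px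
              + MvPolynomial.eval ![q.1, q.2.1] (pderiv 1 (p * X 0)) • py : ℝ × ℝ × ℝ →L[ℝ] ℝ)
            = MvPolynomial.eval ![q.1, q.2.1] p • px + px q •
              (MvPolynomial.eval ![q.1, q.2.1] (pderiv 0 p) • px + MvPolynomial.eval ![q.1, q.2.1] (pderiv 1 p) • py) := by
          refine ContinuousLinearMap.ext fun v => ?_
          simp [pderiv_mul, pderiv_X_self, pderiv_X_of_ne h01.symm, map_add]
          ring
        rw [hf, hL]; exact h2
      · show HasFDerivAt (fun q : ℝ × ℝ × ℝ => MvPolynomial.eval ![q.1, q.2.1] (p * X 1))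
          (MvPolynomial.eval ![q.1, q.2.1] (pderiv 0 (p * X 1)) • px
            + MvPolynomial.eval ![q.1, q.2.1] (pderiv 1 (p * X 1)) • py) q
        have h2 := ih.mul (py.hasFDerivAt (x := q))
        have hf : (fun q : ℝ × ℝ × ℝ => MvPolynomial.eval ![q.1, q.2.1] (p * X 1))
            = fun v : ℝ × ℝ × ℝ => MvPolynomial.eval ![v.1, v.2.1] p * py v := by
          funext v; simp
        have hL : (MvPolynomial.eval ![q.1, q.2.1] (pderiv 0 (p * X 1)) • px
              + MvPolynomial.eval ![q.1, q.2.1] (pderiv 1 (p * X 1)) • py : ℝ × ℝ × ℝ →L[ℝ] ℝ)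
            = MvPolynomial.eval ![q.1, q.2.1] p • py + py q •
              (MvPolynomial.eval ![q.1, q.2.1] (pderiv 0 p) • px + MvPolynomial.eval ![q.1, q.2.1] (pderiv 1 p) • py) := by
          refine ContinuousLinearMap.ext fun v => ?_
          simp [pderiv_mul, pderiv_X_self, pderiv_X_of_ne h01, map_add]
          ring
        rw [hf, hL]; exact h2

lemma blockHasFDerivAt (A : MvPolynomial (Fin 2) ℝ) {Cf : ℝ → ℝ} {c : ℝ} (q : ℝ × ℝ × ℝ)
    (hC : HasDerivAt Cf c q.2.2) :
    HasFDerivAt (fun q : ℝ × ℝ × ℝ => MvPolynomial.eval ![q.1, q.2.1] A * Cf q.2.2)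
      ((MvPolynomial.eval ![q.1, q.2.1] (pderiv 0 A) * Cf q.2.2) • px
        + (MvPolynomial.eval ![q.1, q.2.1] (pderiv 1 A) * Cf q.2.2) • py
        + (MvPolynomial.eval ![q.1, q.2.1] A * c) • pz) q := by
  have hCz : HasFDerivAt (fun q : ℝ × ℝ × ℝ => Cf q.2.2) (c • pz) q :=
    HasDerivAt.comp_hasFDerivAt q hC pz.hasFDerivAt
  have h := (mvHasFDerivAt A q).mul hCz
  have hL : ((MvPolynomial.eval ![q.1, q.2.1] (pderiv 0 A) * Cf q.2.2) • px
        + (MvPolynomial.eval ![q.1, q.2.1] (pderiv 1 A) * Cf q.2.2) • py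
        + (MvPolynomial.eval ![q.1, q.2.1] A * c) • pz : ℝ × ℝ × ℝ →L[ℝ] ℝ)
      = MvPolynomial.eval ![q.1, q.2.1] A • (c • pz)
        + Cf q.2.2 • (MvPolynomial.eval ![q.1, q.2.1] (pderiv 0 A) • px
            + MvPolynomial.eval ![q.1, q.2.1] (pderiv 1 A) • py) := by
    refine ContinuousLinearMap.ext fun v => ?_
    simp
    ring
  rw [hL]; exact h

lemma mvHasDerivAt_x (A : MvPolynomial (Fin 2) ℝ) (x y : ℝ) :
    HasDerivAt (fun x : ℝ => MvPolynomial.eval ![x, y] A) (MvPolynomial.eval ![x, y] (pderiv 0 A)) x := by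
  have hc : HasDerivAt (fun x : ℝ => ((x, y, (0:ℝ)) : ℝ × ℝ × ℝ)) ((1:ℝ), (0:ℝ), (0:ℝ)) x :=
    (hasDerivAt_id x).prodMk ((hasDerivAt_const x y).prodMk (hasDerivAt_const x 0))
  have h := (mvHasFDerivAt A (x, y, 0)).comp_hasDerivAt x hc
  simpa [Function.comp_def] using h

lemma mvHasDerivAt_y (A : MvPolynomial (Fin 2) ℝ) (x y : ℝ) :
    HasDerivAt (fun y : ℝ => MvPolynomial.eval ![x, y] A) (MvPolynomial.eval ![x, y] (pderiv 1 A)) y := by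
  have hc : HasDerivAt (fun y : ℝ => ((x, y, (0:ℝ)) : ℝ × ℝ × ℝ)) ((0:ℝ), (1:ℝ), (0:ℝ)) y :=
    (hasDerivAt_const y x).prodMk ((hasDerivAt_id y).prodMk (hasDerivAt_const y 0))
  have h := (mvHasFDerivAt A (x, y, 0)).comp_hasDerivAt y hc
  simpa [Function.comp_def] using h

lemma eval_aeval (T : Polynomial ℝ) (v : Fin 2 → ℝ) (j : Fin 2) :
    MvPolynomial.eval v (Polynomial.aeval (X j : MvPolynomial (Fin 2) ℝ) T)
      = Polynomial.eval (v j) T := by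
  induction T using Polynomial.induction_on' with
  | add p q hp hq => simp [map_add, hp, hq]
  | monomial n a => simp [Polynomial.aeval_monomial]

lemma pderiv_aeval_same (j : Fin 2) (T : Polynomial ℝ) :
    pderiv j (Polynomial.aeval (X j : MvPolynomial (Fin 2) ℝ) T)
      = Polynomial.aeval (X j : MvPolynomial (Fin 2) ℝ) (Polynomial.derivative T) := by
  induction T using Polynomial.induction_on' with
  | add p q hp hq => simp [map_add, hp, hq]
  | monomial n a =>
      simp [Polynomial.aeval_monomial, pderiv_C_mul, pderiv_pow, pderiv_X_self,
        Polynomial.derivative_monomial]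
      ring

lemma pderiv_aeval_ne {i j : Fin 2} (h : i ≠ j) (T : Polynomial ℝ) :
    pderiv i (Polynomial.aeval (X j : MvPolynomial (Fin 2) ℝ) T) = 0 := by
  induction T using Polynomial.induction_on' with
  | add p q hp hq => simp [map_add, hp, hq]
  | monomial n a =>
      simp [Polynomial.aeval_monomial, pderiv_C_mul, pderiv_pow, pderiv_X_of_ne h.symm]

lemma poly1_zero (B : MvPolynomial (Fin 1) ℝ)
    (h : ∀ y ∈ Set.Ioo (0:ℝ) 1, MvPolynomial.eval ![y] B = 0) : B = 0 := by
  set Q : Polynomial ℝ :=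
    Polynomial.map (MvPolynomial.eval (![] : Fin 0 → ℝ)) (finSuccEquiv ℝ 0 B) with hQ
  have hQ0 : Q = 0 := by
    refine Polynomial.eq_zero_of_infinite_isRoot _ ?_
    refine (Set.Ioo_infinite (by norm_num : (0:ℝ) < 1)).mono ?_
    intro y hy
    have := h y hy
    rwa [show (![y] : Fin 1 → ℝ) = Fin.cons y ![] from rfl,
      eval_eq_eval_mv_eval'] at this
  have hinj : Function.Injective (MvPolynomial.eval (![] : Fin 0 → ℝ)) := by
    intro u v huv
    obtain ⟨a, rfl⟩ := MvPolynomial.C_surjective (Fin 0) u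
    obtain ⟨b, rfl⟩ := MvPolynomial.C_surjective (Fin 0) v
    simpa using huv
  have : finSuccEquiv ℝ 0 B = 0 := by
    apply Polynomial.map_injective _ hinj
    simpa using hQ0
  exact (map_eq_zero_iff _ (AlgEquiv.injective _)).mp this

lemma poly2_zero (A : MvPolynomial (Fin 2) ℝ)
    (h : ∀ x ∈ Set.Ioo (0:ℝ) 1, ∀ y ∈ Set.Ioo (0:ℝ) 1, MvPolynomial.eval ![x, y] A = 0) :
    A = 0 := by
  have key : ∀ y ∈ Set.Ioo (0:ℝ) 1,
      Polynomial.map (MvPolynomial.eval ![y]) (finSuccEquiv ℝ 1 A) = 0 := by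
    intro y hy
    refine Polynomial.eq_zero_of_infinite_isRoot _ ?_
    refine (Set.Ioo_infinite (by norm_num : (0:ℝ) < 1)).mono ?_
    intro x hx
    have := h x hx y hy
    rwa [show (![x, y] : Fin 2 → ℝ) = Fin.cons x ![y] from rfl,
      eval_eq_eval_mv_eval'] at this
  have hcoeff : ∀ n : ℕ, (finSuccEquiv ℝ 1 A).coeff n = 0 := by
    intro n
    apply poly1_zero
    intro y hy
    have h2 := congrArg (fun Q => Polynomial.coeff Q n) (key y hy)
    simpa [Polynomial.coeff_map] using h2
  have : finSuccEquiv ℝ 1 A = 0 := Polynomial.ext fun n => by simp [hcoeff n]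
  exact (map_eq_zero_iff _ (AlgEquiv.injective _)).mp this

lemma funext2 (A : MvPolynomial (Fin 2) ℝ)
    (h : ∀ x y : ℝ, MvPolynomial.eval ![x, y] A = 0) : A = 0 := by
  apply MvPolynomial.funext (q := 0)
  intro v
  have hv : v = ![v 0, v 1] := by
    funext i; fin_cases i <;> rfl
  rw [hv]
  simpa using h (v 0) (v 1)

lemma rep_of_mem_Qsp {l m n : ℤ} {κ : ℕ} {χ : (ℝ × ℝ × ℝ) → ℝ}
    (hχ : χ ∈ Qsp l m n κ) :
    ∃ g : Polynomial (MvPolynomial (Fin 2) ℝ),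
      (∀ c : ℕ, n < (c : ℤ) → g.coeff c = 0) ∧
      ∀ q : ℝ × ℝ × ℝ,
        χ q = Polynomial.eval q.2.2 (g.map (MvPolynomial.eval ![q.1, q.2.1]))
                / (1 + q.2.2) ^ κ := by
  refine Submodule.span_induction ?_ ?_ ?_ ?_ hχ
  · rintro f ⟨a, b, c, _, _, hc, rfl⟩
    refine ⟨Polynomial.monomial c (X 0 ^ a * X 1 ^ b), ?_, ?_⟩
    · intro c' hc'
      rw [Polynomial.coeff_monomial]
      have : c ≠ c' := by omega
      simp [this]
    · intro q
      simp [qmon, Polynomial.map_monomial, Polynomial.eval_monomial]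
  · exact ⟨0, by simp, by simp⟩
  · rintro f₁ f₂ - - ⟨g₁, hb₁, he₁⟩ ⟨g₂, hb₂, he₂⟩
    refine ⟨g₁ + g₂, fun c hc => by simp [hb₁ c hc, hb₂ c hc], fun q => ?_⟩
    simp [Pi.add_apply, he₁ q, he₂ q, Polynomial.map_add, add_div]
  · rintro r f - ⟨g, hb, he⟩
    refine ⟨Polynomial.C (MvPolynomial.C r) * g, fun c hc => by simp [hb c hc], fun q => ?_⟩
    simp [Pi.smul_apply, he q, Polynomial.map_mul, smul_eq_mul, mul_div_assoc]

lemma hasDerivAt_one_add (z : ℝ) : HasDerivAt (fun z : ℝ => 1 + z) 1 z := by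
  simpa using (hasDerivAt_id z).const_add (1 : ℝ)

lemma hasDerivAt_one_add_pow (M : ℕ) (z : ℝ) :
    HasDerivAt (fun z : ℝ => (1 + z) ^ (M + 1)) (((M : ℝ) + 1) * (1 + z) ^ M) z := by
  have h := (hasDerivAt_pow (M + 1) (1 + z)).comp z (hasDerivAt_one_add z)
  simpa [Function.comp_def] using h

lemma hasDerivAt_zc (c M : ℕ) {z : ℝ} (hz : (1 : ℝ) + z ≠ 0) :
    HasDerivAt (fun z : ℝ => z ^ (c + 1) / (1 + z) ^ (M + 1))
      ((((c : ℝ) + 1) * z ^ c * (1 + z) - ((M : ℝ) + 1) * z ^ (c + 1)) / (1 + z) ^ (M + 2)) z := by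
  have h : HasDerivAt (fun z : ℝ => z ^ (c + 1) / (1 + z) ^ (M + 1)) _ z :=
    (hasDerivAt_pow (c + 1) z).fun_div (hasDerivAt_one_add_pow M z)
    (pow_ne_zero _ hz)
  convert h using 1
  have h2 : ((1 + z) ^ (M + 1)) ^ 2 = (1 + z) ^ (M + 2) * (1 + z) ^ M := by ring
  rw [h2]
  rw [div_eq_div_iff (by positivity)
    (mul_ne_zero (pow_ne_zero _ hz) (pow_ne_zero _ hz))]
  push_cast
  ring

/-- `z^(m+1)/(1+z)^(m+4)`. -/
def C1f (m : ℕ) : ℝ → ℝ := fun z => z ^ (m + 1) / (1 + z) ^ (m + 4)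
/-- `z^(m+1)/(1+z)^(m+4) * (1+z)`. -/
def C3f (m : ℕ) : ℝ → ℝ := fun z => z ^ (m + 1) / (1 + z) ^ (m + 4) * (1 + z)
/-- `z^(c+1)/(1+z)^(m+4)`. -/
def Ccf (c m : ℕ) : ℝ → ℝ := fun z => z ^ (c + 1) / (1 + z) ^ (m + 4)

def d1v (m : ℕ) (z : ℝ) : ℝ :=
  (((m : ℝ) + 1) * z ^ m * (1 + z) - ((m : ℝ) + 4) * z ^ (m + 1)) / (1 + z) ^ (m + 5)
def d3v (m : ℕ) (z : ℝ) : ℝ := d1v m z * (1 + z) + z ^ (m + 1) / (1 + z) ^ (m + 4)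
def dcv (c m : ℕ) (z : ℝ) : ℝ :=
  (((c : ℝ) + 1) * z ^ c * (1 + z) - ((m : ℝ) + 4) * z ^ (c + 1)) / (1 + z) ^ (m + 5)

lemma hasDerivAt_C1f (m : ℕ) {z : ℝ} (hz : (1 : ℝ) + z ≠ 0) :
    HasDerivAt (C1f m) (d1v m z) z := by
  have h := hasDerivAt_zc m (m + 3) hz
  have e1 : m + 3 + 1 = m + 4 := by omega
  have e2 : m + 3 + 2 = m + 5 := by omega
  rw [e1, e2] at h
  have e3 : ((↑(m + 3) : ℝ) + 1) = (m : ℝ) + 4 := by push_cast; ring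
  rw [e3] at h
  exact h

lemma hasDerivAt_C3f (m : ℕ) {z : ℝ} (hz : (1 : ℝ) + z ≠ 0) :
    HasDerivAt (C3f m) (d3v m z) z := by
  have h := (hasDerivAt_C1f m hz).fun_mul (hasDerivAt_one_add z)
  show HasDerivAt (fun z => C3f m z) (d3v m z) z
  simpa [C3f, C1f, d3v, mul_one] using h

lemma hasDerivAt_Ccf (c m : ℕ) {z : ℝ} (hz : (1 : ℝ) + z ≠ 0) :
    HasDerivAt (Ccf c m) (dcv c m z) z := by
  have h := hasDerivAt_zc c (m + 3) hz
  have e1 : m + 3 + 1 = m + 4 := by omega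
  have e2 : m + 3 + 2 = m + 5 := by omega
  rw [e1, e2] at h
  have e3 : ((↑(m + 3) : ℝ) + 1) = (m : ℝ) + 4 := by push_cast; ring
  rw [e3] at h
  exact h

lemma eval_map_eq_sum (g : Polynomial (MvPolynomial (Fin 2) ℝ))
    (φ : MvPolynomial (Fin 2) ℝ →+* ℝ) (z : ℝ) :
    Polynomial.eval z (g.map φ) = ∑ c ∈ g.support, φ (g.coeff c) * z ^ c := by
  rw [Polynomial.eval_map, Polynomial.eval₂_eq_sum, Polynomial.sum_def]

lemma eval_map_derivative_eq_sum (g : Polynomial (MvPolynomial (Fin 2) ℝ))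
    (φ : MvPolynomial (Fin 2) ℝ →+* ℝ) (z : ℝ) :
    z * Polynomial.eval z (Polynomial.derivative (g.map φ))
      = ∑ c ∈ g.support, φ (g.coeff c) * (c : ℝ) * z ^ c := by
  rw [Polynomial.derivative_map, Polynomial.derivative_apply, Polynomial.sum_def,
    Polynomial.map_sum, Polynomial.eval_finset_sum, Finset.mul_sum]
  refine Finset.sum_congr rfl fun c _ => ?_
  cases c with
  | zero => simp
  | succ n =>
      simp only [Polynomial.map_mul, Polynomial.map_C, Polynomial.map_pow, Polynomial.map_X,
        Polynomial.map_natCast, Polynomial.eval_mul, Polynomial.eval_C, Polynomial.eval_pow,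
        Polynomial.eval_X, Polynomial.eval_natCast, map_mul, map_natCast]
      have h1 : n + 1 - 1 = n := rfl
      rw [h1]
      push_cast
      ring


lemma X_one_sub_ne_zero : (Polynomial.X * (1 - Polynomial.X) : Polynomial ℝ) ≠ 0 := by
  intro h
  have h2 := congrArg (Polynomial.eval (1/2 : ℝ)) h
  norm_num at h2

lemma pts_zero (p : MvPolynomial (Fin 2) ℝ) (t s : Polynomial ℝ)
    (hF : pderiv 0 (pderiv 1 (bub2 p))
        + pderiv 1 (Polynomial.aeval (X 1 : MvPolynomial (Fin 2) ℝ) (bub1 s))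
        + pderiv 0 (Polynomial.aeval (X 0 : MvPolynomial (Fin 2) ℝ) (bub1 t)) = 0) :
    p = 0 ∧ t = 0 ∧ s = 0 := by
  classical
  have h01 : (0 : Fin 2) ≠ 1 := by decide
  set D : MvPolynomial (Fin 2) ℝ :=
    bub2 p + Polynomial.aeval (X 0 : MvPolynomial (Fin 2) ℝ) (bub1 t) * X 1
      + Polynomial.aeval (X 1 : MvPolynomial (Fin 2) ℝ) (bub1 s) * X 0 with hD
  have hD11 : pderiv 0 (pderiv 1 D) = 0 := by
    rw [hD]
    have e1 : pderiv 1 (Polynomial.aeval (X 0 : MvPolynomial (Fin 2) ℝ) (bub1 t)) = 0 :=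
      pderiv_aeval_ne h01.symm _
    have e2 : pderiv 0 (Polynomial.aeval (X 1 : MvPolynomial (Fin 2) ℝ) (bub1 s)) = 0 :=
      pderiv_aeval_ne h01 _
    have e3 : pderiv 0 (pderiv 1 (Polynomial.aeval (X 1 : MvPolynomial (Fin 2) ℝ) (bub1 s)))
        = 0 := by rw [pderiv_comm', e2, map_zero]
    simp only [map_add, pderiv_mul, pderiv_X_self, pderiv_X_of_ne h01,
      pderiv_X_of_ne h01.symm, e1, e2, e3, mul_one, mul_zero, zero_mul, add_zero, zero_add,
      map_zero]
    linear_combination hF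
  have hconst : ∀ x y : ℝ, MvPolynomial.eval ![x, y] (pderiv 0 D)
      = MvPolynomial.eval ![x, 0] (pderiv 0 D) := by
    intro x y
    have hzero : pderiv 1 (pderiv 0 D) = 0 := by rw [pderiv_comm']; exact hD11
    refine is_const_of_deriv_eq_zero (f := fun y : ℝ => MvPolynomial.eval ![x, y] (pderiv 0 D))
      (fun y => (mvHasDerivAt_y (pderiv 0 D) x y).differentiableAt) (fun y => ?_) y 0
    rw [(mvHasDerivAt_y (pderiv 0 D) x y).deriv, hzero, map_zero]
  have hxy : ∀ x y : ℝ, MvPolynomial.eval ![x, y] D - MvPolynomial.eval ![x, 0] D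
      = MvPolynomial.eval ![0, y] D - MvPolynomial.eval ![0, 0] D := by
    intro x y
    refine is_const_of_deriv_eq_zero
      (f := fun x : ℝ => MvPolynomial.eval ![x, y] D - MvPolynomial.eval ![x, 0] D)
      (fun x => ((mvHasDerivAt_x D x y).fun_sub (mvHasDerivAt_x D x 0)).differentiableAt)
      (fun x => ?_) x 0
    rw [((mvHasDerivAt_x D x y).fun_sub (mvHasDerivAt_x D x 0)).deriv, hconst x y, sub_self]
  have hb1 : ∀ x : ℝ, MvPolynomial.eval ![x, (0:ℝ)] D = 0 := by
    intro x
    simp [hD, bub2, bub1, eval_aeval]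
  have hb2 : ∀ y : ℝ, MvPolynomial.eval ![(0:ℝ), y] D = 0 := by
    intro y
    simp [hD, bub2, bub1, eval_aeval]
  have hd0 : ∀ x y : ℝ, MvPolynomial.eval ![x, y] D = 0 := by
    intro x y
    have := hxy x y
    rw [hb1 x, hb2 y, hb1 0] at this
    linarith
  have hD0 : D = 0 := funext2 D hd0
  have hbs : bub1 s = 0 := by
    refine Polynomial.funext fun y => ?_
    have h2 := congrArg (MvPolynomial.eval ![(1:ℝ), y]) hD0
    simpa [hD, bub2, bub1, eval_aeval] using h2
  have hbt : bub1 t = 0 := by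
    refine Polynomial.funext fun x => ?_
    have h2 := congrArg (MvPolynomial.eval ![x, (1:ℝ)]) hD0
    simpa [hD, bub2, bub1, eval_aeval] using h2
  have hs : s = 0 := by
    rcases mul_eq_zero.mp hbs with h | h
    · exact absurd h X_one_sub_ne_zero
    · exact h
  have ht : t = 0 := by
    rcases mul_eq_zero.mp hbt with h | h
    · exact absurd h X_one_sub_ne_zero
    · exact h
  have hbp : bub2 p = 0 := by
    have : D = bub2 p := by rw [hD, hbt, hbs]; simp
    rw [← this, hD0]
  have hp : p = 0 := by
    have hsplit : bub2 p = (X 0 * (1 - X 0) * X 1 * (1 - X 1) : MvPolynomial (Fin 2) ℝ) * p := by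
      rw [bub2]
    rw [hsplit] at hbp
    rcases mul_eq_zero.mp hbp with h | h
    · exfalso
      have h2 := congrArg (MvPolynomial.eval ![(1/2 : ℝ), (1/2 : ℝ)]) h
      norm_num at h2
    · exact h
  exact ⟨hp, ht, hs⟩

end U2divAux


open MvPolynomial Polynomial Set U2divAux in
/-- the divergence operator is injective on `U^{(2),k}_{0,div}(Ω∞)`:
if `div u = 0` on `Ω∞°` for `u = U2divFun k p t̃ s̃ χ` then `u = 0` on `Ω∞°`, and indeed
`p = 0`, `t̃ = 0`, `s̃ = 0` and `χ = 0`. -/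
theorem div_injective_on_U2div (k : ℕ) (hk : 1 ≤ k)
    (p : MvPolynomial (Fin 2) ℝ) (t s : Polynomial ℝ) (χ : (ℝ × ℝ × ℝ) → ℝ)
    (hpts : U2divBounds k p t s)
    (hχ : χ ∈ Qsp ((k : ℤ) - 1) ((k : ℤ) - 1) ((k : ℤ) - 2) (k + 2))
    (hdiv : ∀ q ∈ PyrInfInt, div3 (U2divFun k p t s χ) q = 0) :
    (∀ q ∈ PyrInfInt, U2divFun k p t s χ q = 0) ∧
    p = 0 ∧ t = 0 ∧ s = 0 ∧ χ = 0 := by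
  classical
  obtain ⟨g, hgb, hrep⟩ := rep_of_mem_Qsp hχ
  have main : p = 0 ∧ t = 0 ∧ s = 0 ∧ χ = 0 := by
    rcases eq_or_lt_of_le hk with hk1 | hk2
    · -- the case k = 1 : everything vanishes by the degree bounds
      subst hk1
      have hp0 : p = 0 := by
        rw [← MvPolynomial.support_eq_empty]
        refine Finset.eq_empty_of_forall_notMem fun d hd => ?_
        have h2 := (hpts.1 d hd).1
        norm_num at h2
        omega
      have ht0 : t = 0 := by
        rw [← Polynomial.support_eq_empty]
        refine Finset.eq_empty_of_forall_notMem fun n hn => ?_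
        have h2 := hpts.2.1 n hn
        norm_num at h2
        omega
      have hs0 : s = 0 := by
        rw [← Polynomial.support_eq_empty]
        refine Finset.eq_empty_of_forall_notMem fun n hn => ?_
        have h2 := hpts.2.2 n hn
        norm_num at h2
        omega
      have hg0 : g = 0 := Polynomial.ext fun c => by
        have := hgb c (by push_cast; omega)
        simpa using this
      have hχ0 : χ = 0 := by
        funext q
        rw [hrep q, hg0]
        simp
      exact ⟨hp0, ht0, hs0, hχ0⟩
    · -- the main case k ≥ 2
      obtain ⟨m, rfl⟩ : ∃ m, k = m + 2 := ⟨k - 2, by omega⟩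
      have hgb' : ∀ c : ℕ, m < c → g.coeff c = 0 := fun c hc =>
        hgb c (by push_cast; omega)
      have h01 : (0 : Fin 2) ≠ 1 := by decide
      set T2 : MvPolynomial (Fin 2) ℝ :=
        Polynomial.aeval (X 0 : MvPolynomial (Fin 2) ℝ) (bub1 t) with hT2d
      set S2 : MvPolynomial (Fin 2) ℝ :=
        Polynomial.aeval (X 1 : MvPolynomial (Fin 2) ℝ) (bub1 s) with hS2d
      set F : MvPolynomial (Fin 2) ℝ :=
        pderiv 0 (pderiv 1 (bub2 p)) + pderiv 1 S2 + pderiv 0 T2 with hFd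
      set G1 : MvPolynomial (Fin 2) ℝ :=
        pderiv 1 (bub2 p) + MvPolynomial.C 2 * T2 with hG1d
      set G2 : MvPolynomial (Fin 2) ℝ :=
        pderiv 0 (bub2 p) + MvPolynomial.C 2 * S2 with hG2d
      have hGsum : pderiv 0 G1 + pderiv 1 G2 = MvPolynomial.C 2 * F := by
        rw [hG1d, hG2d, hFd]
        have hcom : pderiv 1 (pderiv 0 (bub2 p)) = pderiv 0 (pderiv 1 (bub2 p)) :=
          pderiv_comm' 1 0 (bub2 p)
        have hC2 : (MvPolynomial.C 2 : MvPolynomial (Fin 2) ℝ) = 2 := map_ofNat _ 2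
        simp only [map_add, pderiv_C_mul, hcom]
        rw [hC2]
        ring
      -- the three component functions
      have e21 : m + 2 - 1 = m + 1 := by omega
      have e24 : m + 2 + 2 = m + 4 := by omega
      have hf1 : (fun q : ℝ × ℝ × ℝ => (U2divFun (m + 2) p t s χ q).1)
          = fun q : ℝ × ℝ × ℝ => MvPolynomial.eval ![q.1, q.2.1] G1 * C1f m q.2.2 := by
        funext q
        simp only [U2divFun, Prod.fst_add, Prod.smul_fst, smul_eq_mul, C1f, e21, e24,
          hG1d, map_add, map_mul, MvPolynomial.eval_C, eval_aeval, hT2d]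
        simp only [Matrix.cons_val_zero]
        ring
      have hf2 : (fun q : ℝ × ℝ × ℝ => (U2divFun (m + 2) p t s χ q).2.1)
          = fun q : ℝ × ℝ × ℝ => MvPolynomial.eval ![q.1, q.2.1] G2 * C1f m q.2.2 := by
        funext q
        simp only [U2divFun, Prod.snd_add, Prod.smul_snd, Prod.fst_add, Prod.smul_fst,
          smul_eq_mul, C1f, e21, e24, hG2d, map_add, map_mul, MvPolynomial.eval_C,
          eval_aeval, hS2d]
        simp only [Matrix.cons_val_one, Matrix.head_cons, Matrix.cons_val_zero]
        ring
      have hf3 : (fun q : ℝ × ℝ × ℝ => (U2divFun (m + 2) p t s χ q).2.2)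
          = fun q : ℝ × ℝ × ℝ => MvPolynomial.eval ![q.1, q.2.1] F * C3f m q.2.2
              + ∑ c ∈ g.support,
                  MvPolynomial.eval ![q.1, q.2.1] (g.coeff c) * Ccf c m q.2.2 := by
        funext q
        have hχsum : q.2.2 * χ q
            = ∑ c ∈ g.support,
                MvPolynomial.eval ![q.1, q.2.1] (g.coeff c) * Ccf c m q.2.2 := by
          rw [hrep q, eval_map_eq_sum, Finset.sum_div, Finset.mul_sum]
          refine Finset.sum_congr rfl fun c _ => ?_
          simp only [Ccf]
          rw [e24]
          ring
        simp only [U2divFun, Prod.snd_add, Prod.smul_snd, smul_eq_mul]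
        rw [hχsum]
        congr 1
        simp only [C3f, e21, e24, hFd, map_add, pderiv_aeval_same, eval_aeval, hT2d, hS2d]
        simp only [Matrix.cons_val_zero, Matrix.cons_val_one, Matrix.head_cons]
        ring
      -- pointwise vanishing of the polynomial `P`
      set AA : Polynomial (MvPolynomial (Fin 2) ℝ) :=
        g + Polynomial.X * Polynomial.derivative g with hAAd
      set P : Polynomial (MvPolynomial (Fin 2) ℝ) :=
        Polynomial.C (MvPolynomial.C ((m : ℝ) + 1) * F) * Polynomial.X ^ m
          + Polynomial.C (MvPolynomial.C ((m : ℝ) + 1) * F) * Polynomial.X ^ (m + 1)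
          + AA + Polynomial.X * AA
          - Polynomial.C (MvPolynomial.C ((m : ℝ) + 4)) * (Polynomial.X * g) with hPd
      have hPeval : ∀ q : ℝ × ℝ × ℝ, q ∈ PyrInfInt →
          Polynomial.eval q.2.2 (P.map (MvPolynomial.eval ![q.1, q.2.1])) = 0 := by
        rintro ⟨x, y, z⟩ ⟨hx0, hx1, hy0, hy1, hz0⟩
        have hz1 : (1 : ℝ) + z ≠ 0 := by positivity
        have H1 := blockHasFDerivAt G1 (q := (x, y, z)) (hasDerivAt_C1f m hz1)
        have H2 := blockHasFDerivAt G2 (q := (x, y, z)) (hasDerivAt_C1f m hz1)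
        have H3 := (blockHasFDerivAt F (q := (x, y, z)) (hasDerivAt_C3f m hz1)).fun_add
          (HasFDerivAt.fun_sum (fun c (_ : c ∈ g.support) =>
            blockHasFDerivAt (g.coeff c) (q := (x, y, z)) (hasDerivAt_Ccf c m hz1)))
        have hdq := hdiv (x, y, z) ⟨hx0, hx1, hy0, hy1, hz0⟩
        rw [div3, hf1, hf2, hf3, H1.fderiv, H2.fderiv, H3.fderiv] at hdq
        simp only [ContinuousLinearMap.add_apply, ContinuousLinearMap.coe_sum',
          Finset.sum_apply, ContinuousLinearMap.smul_apply, smul_eq_mul,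
          px_apply, py_apply, pz_apply, mul_zero, mul_one, zero_add, add_zero] at hdq
        -- hdq : eval ∂0G1 * C1f + eval ∂1G2 * C1f + (eval F * d3v + ∑ eval gc * dcv) = 0
        have h2F : MvPolynomial.eval ![x, y] (pderiv 0 G1) * C1f m z
            + MvPolynomial.eval ![x, y] (pderiv 1 G2) * C1f m z
            = 2 * MvPolynomial.eval ![x, y] F * C1f m z := by
          rw [← add_mul, ← map_add, hGsum, map_mul, MvPolynomial.eval_C]
        rw [h2F] at hdq
        have hsplit : (∑ c ∈ g.support,
              MvPolynomial.eval ![x, y] (g.coeff c) * dcv c m z)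
            = ((1 + z) * ((∑ c ∈ g.support, MvPolynomial.eval ![x, y] (g.coeff c) * z ^ c)
                  + (∑ c ∈ g.support,
                      MvPolynomial.eval ![x, y] (g.coeff c) * (c : ℝ) * z ^ c))
                - ((m : ℝ) + 4) * (z * (∑ c ∈ g.support,
                      MvPolynomial.eval ![x, y] (g.coeff c) * z ^ c)))
              / (1 + z) ^ (m + 5) := by
          rw [eq_div_iff (pow_ne_zero _ hz1), Finset.sum_mul]
          have hterm : ∀ c ∈ g.support,
              MvPolynomial.eval ![x, y] (g.coeff c) * dcv c m z * (1 + z) ^ (m + 5)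
              = (1 + z) * (MvPolynomial.eval ![x, y] (g.coeff c) * z ^ c
                    + MvPolynomial.eval ![x, y] (g.coeff c) * (c : ℝ) * z ^ c)
                - ((m : ℝ) + 4) * (z * (MvPolynomial.eval ![x, y] (g.coeff c) * z ^ c)) := by
            intro c _
            simp only [dcv]
            rw [mul_assoc, div_mul_cancel₀ _ (pow_ne_zero _ hz1)]
            ring
          rw [Finset.sum_congr rfl hterm, Finset.sum_sub_distrib, ← Finset.mul_sum,
            ← Finset.mul_sum, Finset.sum_add_distrib, ← Finset.mul_sum]
        rw [hsplit] at hdq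
        -- expansion of the evaluated polynomial P
        have hE : z * Polynomial.eval z
              (Polynomial.map (MvPolynomial.eval ![x, y]) (Polynomial.derivative g))
            = ∑ c ∈ g.support, MvPolynomial.eval ![x, y] (g.coeff c) * (c : ℝ) * z ^ c := by
          rw [← Polynomial.derivative_map]
          exact eval_map_derivative_eq_sum g (MvPolynomial.eval ![x, y]) z
        have hW : Polynomial.eval z (P.map (MvPolynomial.eval ![x, y]))
            = ((m : ℝ) + 1) * MvPolynomial.eval ![x, y] F * z ^ m
              + ((m : ℝ) + 1) * MvPolynomial.eval ![x, y] F * z ^ (m + 1)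
              + (1 + z) * ((∑ c ∈ g.support, MvPolynomial.eval ![x, y] (g.coeff c) * z ^ c)
                  + (∑ c ∈ g.support,
                      MvPolynomial.eval ![x, y] (g.coeff c) * (c : ℝ) * z ^ c))
              - ((m : ℝ) + 4) * (z * (∑ c ∈ g.support,
                    MvPolynomial.eval ![x, y] (g.coeff c) * z ^ c)) := by
          simp only [hPd, hAAd, Polynomial.map_add, Polynomial.map_sub, Polynomial.map_mul,
            Polynomial.map_pow, Polynomial.map_C, Polynomial.map_X, Polynomial.eval_add,
            Polynomial.eval_sub, Polynomial.eval_mul, Polynomial.eval_pow, Polynomial.eval_C,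
            Polynomial.eval_X, map_mul, MvPolynomial.eval_C]
          rw [hE, eval_map_eq_sum]
          ring
        rw [hW]
        have hfinal : ((m : ℝ) + 1) * MvPolynomial.eval ![x, y] F * z ^ m
              + ((m : ℝ) + 1) * MvPolynomial.eval ![x, y] F * z ^ (m + 1)
              + (1 + z) * ((∑ c ∈ g.support, MvPolynomial.eval ![x, y] (g.coeff c) * z ^ c)
                  + (∑ c ∈ g.support,
                      MvPolynomial.eval ![x, y] (g.coeff c) * (c : ℝ) * z ^ c))
              - ((m : ℝ) + 4) * (z * (∑ c ∈ g.support,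
                    MvPolynomial.eval ![x, y] (g.coeff c) * z ^ c))
            = (2 * MvPolynomial.eval ![x, y] F * C1f m z
                + (MvPolynomial.eval ![x, y] F * d3v m z
                  + ((1 + z) * ((∑ c ∈ g.support,
                        MvPolynomial.eval ![x, y] (g.coeff c) * z ^ c)
                      + (∑ c ∈ g.support,
                          MvPolynomial.eval ![x, y] (g.coeff c) * (c : ℝ) * z ^ c))
                    - ((m : ℝ) + 4) * (z * (∑ c ∈ g.support,
                          MvPolynomial.eval ![x, y] (g.coeff c) * z ^ c)))
                    / (1 + z) ^ (m + 5))) * (1 + z) ^ (m + 5) := by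
          simp only [C1f, d3v, d1v]
          field_simp
          ring
        rw [hfinal, hdq, zero_mul]
      -- the polynomial `P` vanishes identically
      have hP0 : P = 0 := by
        refine Polynomial.ext fun n => ?_
        rw [Polynomial.coeff_zero]
        refine poly2_zero _ fun x hx y hy => ?_
        have hmap0 : P.map (MvPolynomial.eval ![x, y]) = 0 := by
          refine Polynomial.eq_zero_of_infinite_isRoot _ ?_
          refine (Set.Ioi_infinite (0 : ℝ)).mono ?_
          intro z hz
          exact hPeval (x, y, z) ⟨hx.1, hx.2, hy.1, hy.2, hz⟩
        have h2 := congrArg (fun Q => Polynomial.coeff Q n) hmap0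
        simpa [Polynomial.coeff_map] using h2
      have hcoeffP : ∀ n : ℕ, P.coeff n = 0 := fun n => by rw [hP0, Polynomial.coeff_zero]
      -- coefficient bookkeeping
      have hA : ∀ n : ℕ, AA.coeff n
          = (((n : ℕ) : MvPolynomial (Fin 2) ℝ) + 1) * g.coeff n := by
        intro n
        rw [hAAd]
        cases n with
        | zero =>
            simp [Polynomial.mul_coeff_zero]
        | succ n =>
            rw [Polynomial.coeff_add, Polynomial.coeff_X_mul, Polynomial.coeff_derivative]
            push_cast
            ring
      have fact0 : MvPolynomial.C ((m : ℝ) + 1) * F * (if 0 = m then 1 else 0)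
          + g.coeff 0 = 0 := by
        have h := hcoeffP 0
        rw [hPd] at h
        simp only [Polynomial.coeff_add, Polynomial.coeff_sub, Polynomial.coeff_C_mul,
          Polynomial.coeff_X_pow, Polynomial.mul_coeff_zero, Polynomial.coeff_X_zero,
          Polynomial.coeff_C_zero, zero_mul, add_zero, sub_zero, mul_zero] at h
        rw [hA 0] at h
        push_cast at h
        linear_combination h
      have factS : ∀ n : ℕ, MvPolynomial.C ((m : ℝ) + 1) * F * (if n + 1 = m then 1 else 0)
          + MvPolynomial.C ((m : ℝ) + 1) * F * (if n + 1 = m + 1 then 1 else 0)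
          + ((((n + 1 : ℕ)) : MvPolynomial (Fin 2) ℝ) + 1) * g.coeff (n + 1)
          + (((n : ℕ) : MvPolynomial (Fin 2) ℝ) + 1) * g.coeff n
          - MvPolynomial.C ((m : ℝ) + 4) * g.coeff n = 0 := by
        intro n
        have h := hcoeffP (n + 1)
        rw [hPd] at h
        simp only [Polynomial.coeff_add, Polynomial.coeff_sub, Polynomial.coeff_C_mul,
          Polynomial.coeff_X_pow, Polynomial.coeff_X_mul] at h
        rw [hA (n + 1), hA n] at h
        push_cast at h
        push_cast
        linear_combination h
      have hlow : ∀ c : ℕ, c < m → g.coeff c = 0 := by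
        intro c
        induction c with
        | zero =>
            intro h0
            have h := fact0
            rw [if_neg (by omega)] at h
            simpa using h
        | succ n ih =>
            intro h1
            have hgn : g.coeff n = 0 := ih (by omega)
            have h := factS n
            rw [if_neg (by omega), if_neg (by omega), hgn] at h
            have h2 : ((((n + 1 : ℕ)) : MvPolynomial (Fin 2) ℝ) + 1) * g.coeff (n + 1) = 0 := by
              linear_combination h
            rcases mul_eq_zero.mp h2 with h3 | h3
            · exfalso
              have h4 := congrArg (MvPolynomial.eval ![(0 : ℝ), 0]) h3
              simp only [map_add, map_natCast, map_one, map_zero] at h4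
              have : ((n : ℝ) + 1 + 1) ≠ 0 := by positivity
              rw [show ((n + 1 : ℕ) : ℝ) = (n : ℝ) + 1 by push_cast; ring] at h4
              exact this (by linarith [h4])
            · exact h3
      have hkey1 : MvPolynomial.C ((m : ℝ) + 1) * F
          + (((m : ℕ) : MvPolynomial (Fin 2) ℝ) + 1) * g.coeff m = 0 := by
        cases m with
        | zero =>
            have h := fact0
            rw [if_pos rfl] at h
            simpa using h
        | succ n =>
            have h := factS n
            rw [if_pos rfl, if_neg (by omega), hlow n (by omega)] at h
            linear_combination h
      have hkey2 : MvPolynomial.C ((m : ℝ) + 1) * F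
          + (((m : ℕ) : MvPolynomial (Fin 2) ℝ) + 1) * g.coeff m
          - MvPolynomial.C ((m : ℝ) + 4) * g.coeff m = 0 := by
        have h := factS m
        rw [if_neg (by omega), if_pos rfl, hgb' (m + 1) (by omega)] at h
        linear_combination h
      have hgm : g.coeff m = 0 := by
        have h3 : MvPolynomial.C ((m : ℝ) + 4) * g.coeff m = 0 := by
          linear_combination hkey1 - hkey2
        rcases mul_eq_zero.mp h3 with h4 | h4
        · exfalso
          have h5 := congrArg (MvPolynomial.eval ![(0 : ℝ), 0]) h4
          simp only [MvPolynomial.eval_C, map_zero] at h5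
          have : ((m : ℝ) + 4) ≠ 0 := by positivity
          exact this h5
        · exact h4
      have hF0 : F = 0 := by
        have h := hkey1
        rw [hgm, mul_zero, add_zero] at h
        rcases mul_eq_zero.mp h with h4 | h4
        · exfalso
          have h5 := congrArg (MvPolynomial.eval ![(0 : ℝ), 0]) h4
          simp only [MvPolynomial.eval_C, map_zero] at h5
          have : ((m : ℝ) + 1) ≠ 0 := by positivity
          exact this h5
        · exact h4
      have hg0 : g = 0 := by
        refine Polynomial.ext fun c => ?_
        rw [Polynomial.coeff_zero]
        rcases lt_trichotomy c m with h | h | h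
        · exact hlow c h
        · rw [h]; exact hgm
        · exact hgb' c h
      have hχ0 : χ = 0 := by
        funext q
        rw [hrep q, hg0]
        simp
      have hpts0 := pts_zero p t s (by rw [← hS2d, ← hT2d, ← hFd]; exact hF0)
      exact ⟨hpts0.1, hpts0.2.1, hpts0.2.2, hχ0⟩
  obtain ⟨hp0, ht0, hs0, hχ0⟩ := main
  subst hp0; subst ht0; subst hs0; subst hχ0
  refine ⟨?_, rfl, rfl, rfl, rfl⟩
  intro q hq
  simp [U2divFun, bub2, bub1, Prod.ext_iff]


end
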